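/- Let M, N ∈ O(d) be orthogonal matrices with det(M) = 1 and det(N) = -1. Then the Frobenius norm of M - N is at least 2. -/

import Mathlib

open Matrix

/-- The Frobenius norm of a real matrix: `‖A‖ = sqrt (trace (Aᵀ A))`. -/
noncomputable def frobNorm {m n : Type*} [Fintype m] [Fintype n]
    (A : Matrix m n ℝ) : ℝ :=
  Real.sqrt (Matrix.trace (Aᵀ * A))

lemma psd_trace_nonneg {n : Type*} [Fintype n] [DecidableEq n] {A : Matrix n n ℝ}
    (hA : A.PosSemidef) : 0 ≤ A.trace := by
  rw [Matrix.trace]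
  refine Finset.sum_nonneg fun i _ => ?_
  have h := hA.dotProduct_mulVec_nonneg (Pi.single i 1)
  simpa [Matrix.mulVec, dotProduct, Pi.single_apply] using h

lemma trace_mul_vecMulVec {n : Type*} [Fintype n] (A : Matrix n n ℝ) (v w : n → ℝ) :
    (A * Matrix.vecMulVec v w).trace = w ⬝ᵥ (A *ᵥ v) := by
  simp only [Matrix.trace, Matrix.diag, Matrix.mul_apply, Matrix.vecMulVec_apply,
    dotProduct, Matrix.mulVec]
  refine Finset.sum_congr rfl fun i _ => ?_
  rw [Finset.mul_sum]
  exact Finset.sum_congr rfl fun j _ => by ring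

lemma vecMulVec_mulVec' {n : Type*} [Fintype n] (v w x : n → ℝ) :
    Matrix.vecMulVec v w *ᵥ x = (w ⬝ᵥ x) • v := by
  funext i
  simp only [Matrix.mulVec, dotProduct, Matrix.vecMulVec_apply, Pi.smul_apply,
    smul_eq_mul]
  rw [Finset.sum_mul]
  exact Finset.sum_congr rfl fun j _ => by ring

lemma le_trace_of_eig {n : Type*} [Fintype n] [DecidableEq n] {A : Matrix n n ℝ}
    (hA : A.PosSemidef) {v : n → ℝ} (hv : v ≠ 0) {μ : ℝ} (h : A *ᵥ v = μ • v) :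
    μ ≤ A.trace := by
  set c : ℝ := v ⬝ᵥ v with hc
  have hc0 : 0 < c := by
    have hnn : 0 ≤ c := Finset.sum_nonneg fun i _ => mul_self_nonneg (v i)
    rcases lt_or_eq_of_le hnn with h' | h'
    · exact h'
    · exact absurd ((dotProduct_self_eq_zero).mp h'.symm) hv
  -- P = 1 - c⁻¹ • v vᵀ is positive semidefinite
  set P : Matrix n n ℝ := 1 - c⁻¹ • Matrix.vecMulVec v v with hP
  have hPpsd : P.PosSemidef := by
    refine Matrix.PosSemidef.of_dotProduct_mulVec_nonneg ?_ ?_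
    · unfold Matrix.IsHermitian
      ext i j
      simp [hP, Matrix.vecMulVec_apply, Matrix.one_apply, mul_comm, eq_comm]
    · intro x
      have hx : P *ᵥ x = x - (c⁻¹ * (v ⬝ᵥ x)) • v := by
        rw [hP, Matrix.sub_mulVec, Matrix.one_mulVec, Matrix.smul_mulVec,
          vecMulVec_mulVec', smul_smul]
      rw [hx]
      have hcs : (v ⬝ᵥ x) ^ 2 ≤ c * (x ⬝ᵥ x) := by
        simpa [hc, dotProduct, pow_two, Finset.sum_mul_sq_le_sq_mul_sq] using
          Finset.sum_mul_sq_le_sq_mul_sq Finset.univ v x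
      have : star x ⬝ᵥ (x - (c⁻¹ * (v ⬝ᵥ x)) • v) =
          x ⬝ᵥ x - c⁻¹ * (v ⬝ᵥ x) * (x ⬝ᵥ v) := by
        simp [dotProduct_sub, dotProduct_smul, smul_eq_mul]
      rw [this, dotProduct_comm x v]
      have h2 : c⁻¹ * (v ⬝ᵥ x) * (v ⬝ᵥ x) ≤ x ⬝ᵥ x := by
        rw [mul_assoc, ← pow_two]
        calc c⁻¹ * (v ⬝ᵥ x) ^ 2 ≤ c⁻¹ * (c * (x ⬝ᵥ x)) :=
              mul_le_mul_of_nonneg_left hcs (by positivity)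
          _ = x ⬝ᵥ x := by field_simp
      linarith
  -- trace (A * P) ≥ 0
  have htrAP : 0 ≤ (A * P).trace := by
    obtain ⟨S, hSps, hSH, hsq⟩ : ∃ S : Matrix n n ℝ, S.PosSemidef ∧ Sᴴ = S ∧ S * S = A :=
      by open scoped MatrixOrder in
        exact ⟨CFC.sqrt A, (CFC.sqrt_nonneg A).posSemidef, (CFC.sqrt_nonneg A).posSemidef.isHermitian,
          CFC.sqrt_mul_sqrt_self A hA.nonneg⟩
    have h1 : (A * P).trace = (S * P * Sᴴ).trace := by
      rw [hSH, ← hsq, Matrix.mul_assoc, Matrix.trace_mul_comm]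
    rw [h1]
    exact psd_trace_nonneg (hPpsd.mul_mul_conjTranspose_same S)
  -- trace (A * P) = trace A - μ
  have hexp : (A * P).trace = A.trace - μ := by
    rw [hP, Matrix.mul_sub, Matrix.mul_one, Matrix.mul_smul, Matrix.trace_sub,
      Matrix.trace_smul, trace_mul_vecMulVec, h, dotProduct_smul,
      dotProduct_comm]
    have : c⁻¹ • (μ • (v ⬝ᵥ v)) = μ := by
      rw [← hc, smul_eq_mul, smul_eq_mul]
      field_simp
    rw [this]
  linarith [htrAP, hexp.symm.le]

theorem trace_le_of_orth {d : ℕ} (Q : Matrix (Fin d) (Fin d) ℝ)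
    (hQ : Q * Qᵀ = 1) (hdet : Q.det = -1) : Q.trace ≤ (d : ℝ) - 2 := by
  -- det (1 + Q) = 0
  have hdet0 : (1 + Q).det = 0 := by
    have h1 : (1 : Matrix (Fin d) (Fin d) ℝ) + Q = Q * (Qᵀ + 1) := by
      rw [mul_add, hQ, mul_one, add_comm]
    have h2 : (1 + Q).det = - (1 + Q).det := by
      calc (1 + Q).det = Q.det * (Qᵀ + 1).det := by rw [h1, Matrix.det_mul]
        _ = - ((Q + 1)ᵀ).det := by
            rw [hdet, Matrix.transpose_add, Matrix.transpose_one, neg_one_mul]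
        _ = - (1 + Q).det := by rw [Matrix.det_transpose, add_comm]
    linarith
  -- eigenvector with eigenvalue -1
  obtain ⟨v, hv0, hv⟩ := Matrix.exists_mulVec_eq_zero_iff.mpr hdet0
  have hQv : Q *ᵥ v = -v := by
    have := hv
    rw [Matrix.add_mulVec, Matrix.one_mulVec] at this
    linear_combination (norm := module) this
  have hQt : Qᵀ * Q = 1 := mul_eq_one_comm.mp hQ
  have hQtv : Qᵀ *ᵥ v = -v := by
    have h3 : Qᵀ *ᵥ (Q *ᵥ v) = v := by
      rw [Matrix.mulVec_mulVec, hQt, Matrix.one_mulVec]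
    rw [hQv, Matrix.mulVec_neg] at h3
    exact neg_eq_iff_eq_neg.mp h3
  -- A = (1 - Q)(1 - Q)ᵀ is PSD with eigenvalue 4
  set A : Matrix (Fin d) (Fin d) ℝ := (1 - Q) * (1 - Q)ᵀ with hA
  have hT : (1 - Q)ᴴ = (1 - Q)ᵀ := by
    ext i j; simp [Matrix.conjTranspose_apply, Matrix.transpose_apply]
  have hApsd : A.PosSemidef := by
    rw [hA, ← hT]
    exact Matrix.posSemidef_self_mul_conjTranspose _
  have hAv : A *ᵥ v = (4 : ℝ) • v := by
    rw [hA, ← Matrix.mulVec_mulVec]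
    have h4 : (1 - Q)ᵀ *ᵥ v = v - Qᵀ *ᵥ v := by
      rw [Matrix.transpose_sub, Matrix.transpose_one, Matrix.sub_mulVec,
        Matrix.one_mulVec]
    rw [h4, hQtv]
    have h5 : v - -v = (2 : ℝ) • v := by module
    rw [h5, Matrix.mulVec_smul, Matrix.sub_mulVec, Matrix.one_mulVec, hQv]
    module
  have key := le_trace_of_eig hApsd hv0 hAv
  -- trace A = 2d - 2 trace Q
  have htr : A.trace = 2 * (d : ℝ) - 2 * Q.trace := by
    have hexp : A = 1 - Qᵀ - Q + Q * Qᵀ := by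
      rw [hA, Matrix.transpose_sub, Matrix.transpose_one, mul_sub, sub_mul, sub_mul,
        one_mul, mul_one, one_mul]
      abel
    rw [hexp, hQ, Matrix.trace_add, Matrix.trace_sub, Matrix.trace_sub,
      Matrix.trace_one, Matrix.trace_transpose]
    simp
    ring
  rw [htr] at key
  linarith

/-- Orthogonal matrices with determinants `1` and `-1` are at Frobenius distance
at least `2`. -/
theorem frobNorm_ge_two_of_det_ne
    (d : ℕ) (M N : Matrix (Fin d) (Fin d) ℝ)
    (hM : M * Mᵀ = 1) (hN : N * Nᵀ = 1)
    (hdM : M.det = 1) (hdN : N.det = -1) :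
    2 ≤ frobNorm (M - N) := by
  have hM' : Mᵀ * M = 1 := mul_eq_one_comm.mp hM
  have hN' : Nᵀ * N = 1 := mul_eq_one_comm.mp hN
  set Q := Mᵀ * N with hQdef
  have hQT : Qᵀ = Nᵀ * M := by
    rw [hQdef, Matrix.transpose_mul, Matrix.transpose_transpose]
  have hQo : Q * Qᵀ = 1 := by
    rw [hQT, hQdef, Matrix.mul_assoc, ← Matrix.mul_assoc N, hN, one_mul]
    exact hM'
  have hQd : Q.det = -1 := by
    rw [hQdef, Matrix.det_mul, Matrix.det_transpose, hdM, hdN]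
    ring
  have key := trace_le_of_orth Q hQo hQd
  have hE : (M - N)ᵀ * (M - N) = 1 + 1 - Q - Qᵀ := by
    rw [Matrix.transpose_sub, sub_mul, mul_sub, mul_sub, hM', hN', hQT]
    abel
  have htr : ((M - N)ᵀ * (M - N)).trace = 2 * (d : ℝ) - 2 * Q.trace := by
    rw [hE]
    simp [Matrix.trace_sub, Matrix.trace_add, Matrix.trace_one, Matrix.trace_transpose]
    ring
  unfold frobNorm
  rw [htr]
  have h4 : (4 : ℝ) ≤ 2 * (d : ℝ) - 2 * Q.trace := by linarith
  calc (2 : ℝ) = Real.sqrt 4 := by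
        rw [show (4 : ℝ) = 2 ^ 2 by norm_num, Real.sqrt_sq (by norm_num : (0:ℝ) ≤ 2)]
    _ ≤ _ := Real.sqrt_le_sqrt h4
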